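/- Let s ≥ 1 be an integer, A > 0, ε ≥ 0, m ∈ [−1, 1], and ρ ∈ ℝ. Suppose |ρ| ≥ A·|m|^{2s−1} and |ρ|·√(1 − m²) ≤ ε. Then either |m| ≤ (2ε/A)^{1/(2s−1)} or 1 − |m| ≤ (2^{2s−1}/A)²·ε². -/
import Mathlib


/-- deterministic core of Lemma C.6: an approximate critical latitude is
either near the equator (`|m| ≈ 0`) or near the poles (`|m| ≈ 1`). -/
theorem near_critical_dichotomy (s : ℕ) (hs : 1 ≤ s) (A ε m ρ : ℝ)
    (hA : 0 < A) (hε : 0 ≤ ε) (hm : m ∈ Set.Icc (-1 : ℝ) 1)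
    (hlow : A * |m| ^ (2 * s - 1) ≤ |ρ|)
    (hgrad : |ρ| * Real.sqrt (1 - m ^ 2) ≤ ε) :
    |m| ≤ (2 * ε / A) ^ ((1 : ℝ) / (2 * (s : ℝ) - 1)) ∨
      1 - |m| ≤ ((2 ^ (2 * s - 1) : ℝ) / A) ^ 2 * ε ^ 2 := by
  obtain ⟨hm1, hm2⟩ := hm
  have hx0 : (0:ℝ) ≤ |m| := abs_nonneg m
  have hx1 : |m| ≤ 1 := abs_le.mpr ⟨hm1, hm2⟩
  have hm2' : (0:ℝ) ≤ 1 - m ^ 2 := by nlinarith [sq_abs m]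
  have hsnn : (0:ℝ) ≤ Real.sqrt (1 - m ^ 2) := Real.sqrt_nonneg _
  have hchain : A * |m| ^ (2 * s - 1) * Real.sqrt (1 - m ^ 2) ≤ ε :=
    le_trans (mul_le_mul_of_nonneg_right hlow hsnn) hgrad
  by_cases hcase : |m| < 1 / 2
  · left
    have hsq : (1:ℝ) / 2 ≤ Real.sqrt (1 - m ^ 2) := by
      rw [show ((1:ℝ)/2) = Real.sqrt ((1/2)^2) by
        rw [Real.sqrt_sq]; norm_num]
      apply Real.sqrt_le_sqrt
      nlinarith [sq_abs m]
    have hpnn : (0:ℝ) ≤ |m| ^ (2 * s - 1) := pow_nonneg hx0 _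
    have hk : |m| ^ (2 * s - 1) ≤ 2 * ε / A := by
      rw [le_div_iff₀ hA]
      nlinarith
    have hks : ((2 * s - 1 : ℕ) : ℝ) = 2 * (s : ℝ) - 1 := by
      have : 1 ≤ 2 * s := by omega
      push_cast [Nat.cast_sub this]
      ring
    calc |m| = (|m| ^ (2 * s - 1)) ^ (((2 * s - 1 : ℕ) : ℝ))⁻¹ :=
          (Real.pow_rpow_inv_natCast hx0 (by omega)).symm
      _ ≤ (2 * ε / A) ^ (((2 * s - 1 : ℕ) : ℝ))⁻¹ :=
          Real.rpow_le_rpow hpnn hk (by positivity)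
      _ = (2 * ε / A) ^ ((1 : ℝ) / (2 * (s : ℝ) - 1)) := by
          rw [one_div, hks]
  · right
    push_neg at hcase
    have hpow : ((1:ℝ) / 2) ^ (2 * s - 1) ≤ |m| ^ (2 * s - 1) :=
      pow_le_pow_left₀ (by norm_num) hcase _
    have h2k : (0:ℝ) < (2:ℝ) ^ (2 * s - 1) := by positivity
    have hhalf : ((1:ℝ) / 2) ^ (2 * s - 1) = ((2:ℝ) ^ (2 * s - 1))⁻¹ := by
      rw [one_div, inv_pow]
    have hsqle : Real.sqrt (1 - m ^ 2) ≤ 2 ^ (2 * s - 1) * ε / A := by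
      rw [le_div_iff₀ hA]
      have h1 : A * (((2:ℝ) ^ (2 * s - 1))⁻¹) * Real.sqrt (1 - m ^ 2) ≤ ε := by
        refine le_trans ?_ hchain
        apply mul_le_mul_of_nonneg_right _ hsnn
        rw [← hhalf]
        exact mul_le_mul_of_nonneg_left hpow hA.le
      have h2 : A * Real.sqrt (1 - m ^ 2) ≤ 2 ^ (2 * s - 1) * ε := by
        calc A * Real.sqrt (1 - m ^ 2)
            = (2:ℝ) ^ (2 * s - 1) * (A * (((2:ℝ) ^ (2 * s - 1))⁻¹) * Real.sqrt (1 - m ^ 2)) := by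
              field_simp
          _ ≤ (2:ℝ) ^ (2 * s - 1) * ε := mul_le_mul_of_nonneg_left h1 h2k.le
      linarith [h2]
    have hsq2 : 1 - m ^ 2 ≤ (2 ^ (2 * s - 1) * ε / A) ^ 2 := by
      have := Real.sq_sqrt hm2'
      nlinarith
    have : ((2:ℝ) ^ (2 * s - 1) * ε / A) ^ 2 = ((2 ^ (2 * s - 1) : ℝ) / A) ^ 2 * ε ^ 2 := by
      ring
    nlinarith [sq_abs m]
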